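/- If a sequence q_1 q_2 ⋯ q_n from {A, S, N} is attainable over a field F, then: (i) q_n ≠ S, and (ii) neither NA nor NS occurs as a consecutive subsequence of q_1 q_2 ⋯ q_n. -/
import Mathlib


open Matrix

/-- The minor of a square matrix `B` lying in the rows indexed by `α` and the columns
indexed by `β` (each listed in increasing order); junk value `0` if `α.card ≠ β.card`. -/
def qMinor {R : Type*} [CommRing R] {m : Type*} [Fintype m] [LinearOrder m]
    (B : Matrix m m R) (α β : Finset m) : R :=
  if h : β.card = α.card then
    (Matrix.of fun i j : Fin α.card =>
      B (α.orderEmbOfFin rfl i) (β.orderEmbOfFin h j)).det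
  else 0

/-- `α` and `β` index a quasi-principal submatrix of order `k`, i.e.
`|α| = |β| = k` and `k - 1 ≤ |α ∩ β| (≤ k)`. -/
def IsQPPair {m : Type*} [DecidableEq m] (k : ℕ) (α β : Finset m) : Prop :=
  α.card = k ∧ β.card = k ∧ k - 1 ≤ (α ∩ β).card

/-- All quasi-principal minors of `B` of order `k` are nonzero. -/
def QPAllNonzero {R : Type*} [CommRing R] {m : Type*} [Fintype m] [LinearOrder m]
    (B : Matrix m m R) (k : ℕ) : Prop :=
  ∀ α β : Finset m, IsQPPair k α β → qMinor B α β ≠ 0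

/-- All quasi-principal minors of `B` of order `k` are zero. -/
def QPAllZero {R : Type*} [CommRing R] {m : Type*} [Fintype m] [LinearOrder m]
    (B : Matrix m m R) (k : ℕ) : Prop :=
  ∀ α β : Finset m, IsQPPair k α β → qMinor B α β = 0

/-- The three possible letters of a qpr-sequence. -/
inductive QPR : Type
  | A
  | S
  | N
deriving DecidableEq

open Classical in
/-- The letter of the qpr-sequence of `B` corresponding to order `k`:
`A` if all quasi-principal minors of order `k` are nonzero, `N` if all are zero,
and `S` otherwise. -/
noncomputable def qprEntry {R : Type*} [CommRing R] {m : Type*} [Fintype m] [LinearOrder m]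
    (B : Matrix m m R) (k : ℕ) : QPR :=
  if QPAllNonzero B k then QPR.A
  else if QPAllZero B k then QPR.N
  else QPR.S

/-- A sequence of letters `q 0, …, q (n-1)` (standing for `q_1 ⋯ q_n`) is attainable
over `F` if it is the qpr-sequence of an `n × n` symmetric matrix over `F`. -/
def Attainable (F : Type*) [Field F] {n : ℕ} (q : Fin n → QPR) : Prop :=
  ∃ B : Matrix (Fin n) (Fin n) F, B.IsSymm ∧ ∀ k : Fin n, qprEntry B ((k : ℕ) + 1) = q k

/-- The Schur complement `B/B[γ] = B[γᶜ] - B[γᶜ, γ] B[γ]⁻¹ B[γ, γᶜ]`,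
with rows and columns indexed by `γᶜ` (indexing inherited from `B`). -/
noncomputable def schurCompl {R : Type*} [CommRing R] {n : ℕ}
    (B : Matrix (Fin n) (Fin n) R) (γ : Finset (Fin n)) :
    Matrix ↥(γᶜ) ↥(γᶜ) R :=
  B.submatrix (fun i : ↥(γᶜ) => (i : Fin n)) (fun j : ↥(γᶜ) => (j : Fin n)) -
    B.submatrix (fun i : ↥(γᶜ) => (i : Fin n)) (fun j : ↥γ => (j : Fin n)) *
      (B.submatrix (fun i : ↥γ => (i : Fin n)) fun j : ↥γ => (j : Fin n))⁻¹ *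
      B.submatrix (fun i : ↥γ => (i : Fin n)) fun j : ↥(γᶜ) => (j : Fin n)

/-- The `(m+1) × (m+1)` matrix with block form `[[A, x], [yᵀ, b]]`. -/
def borderMat {R : Type*} [CommRing R] {m : ℕ} (A : Matrix (Fin m) (Fin m) R)
    (x y : Fin m → R) (b : R) : Matrix (Fin (m + 1)) (Fin (m + 1)) R :=
  Matrix.of fun i j =>
    if hi : (i : ℕ) < m then
      if hj : (j : ℕ) < m then A ⟨i, hi⟩ ⟨j, hj⟩ else x ⟨i, hi⟩
    else
      if hj : (j : ℕ) < m then y ⟨j, hj⟩ else b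


section Aux

variable {R : Type*} [CommRing R] {m : Type*} [Fintype m] [LinearOrder m]

lemma aux_orderEmbOfFin_succAbove (s : Finset m) {k : ℕ} (h : s.card = k + 1)
    (i : Fin (k + 1)) (he : (s.erase (s.orderEmbOfFin h i)).card = k) (j : Fin k) :
    s.orderEmbOfFin h (i.succAbove j)
      = (s.erase (s.orderEmbOfFin h i)).orderEmbOfFin he j := by
  have hmem : ∀ x : Fin k, s.orderEmbOfFin h (i.succAbove x) ∈ s.erase (s.orderEmbOfFin h i) := by
    intro x
    refine Finset.mem_erase.mpr ⟨?_, s.orderEmbOfFin_mem h _⟩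
    intro hEq
    exact Fin.succAbove_ne i x ((s.orderEmbOfFin h).injective hEq)
  have hmono : StrictMono fun x : Fin k => s.orderEmbOfFin h (i.succAbove x) :=
    (s.orderEmbOfFin h).strictMono.comp (Fin.strictMono_succAbove i)
  have := Finset.orderEmbOfFin_unique he hmem hmono
  exact congrFun this j

lemma aux_qMinor_eq (B : Matrix m m R) {k : ℕ} {α β : Finset m}
    (hα : α.card = k) (hβ : β.card = k) :
    qMinor B α β = (Matrix.of fun i j : Fin k =>
      B (α.orderEmbOfFin hα i) (β.orderEmbOfFin hβ j)).det := by
  subst hα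
  rw [qMinor, dif_pos hβ]

lemma aux_qpAllZero_succ (B : Matrix m m R) (k : ℕ) (h : QPAllZero B k) :
    QPAllZero B (k + 1) := by
  rintro α β ⟨hα, hβ, _hint⟩
  rw [aux_qMinor_eq B hα hβ]
  obtain ⟨i0, hi0⟩ : ∃ i0 : Fin (k + 1), ∀ b ∈ β,
      k - 1 ≤ ((α.erase (α.orderEmbOfFin hα i0)) ∩ (β.erase b)).card := by
    by_cases heq : α = β
    · subst heq
      refine ⟨0, fun b hb => ?_⟩
      set a := α.orderEmbOfFin hα 0 with ha
      have hsub : (α.erase a).erase b ⊆ (α.erase a) ∩ (α.erase b) := by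
        intro x hx
        simp only [Finset.mem_erase, Finset.mem_inter] at hx ⊢
        tauto
      have h1 : (α.erase a).card = k := by
        rw [Finset.card_erase_of_mem (α.orderEmbOfFin_mem hα 0), hα]; omega
      have h2 : (α.erase a).card - 1 ≤ ((α.erase a).erase b).card :=
        Finset.pred_card_le_card_erase
      have h3 := Finset.card_le_card hsub
      omega
    · have hns : ¬ α ⊆ β := by
        intro hsub
        exact heq (Finset.eq_of_subset_of_card_le hsub (by rw [hα, hβ]))
      obtain ⟨a, ha, hanb⟩ := Finset.not_subset.mp hns
      have : a ∈ Set.range (α.orderEmbOfFin hα) := by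
        rw [Finset.range_orderEmbOfFin]; exact ha
      obtain ⟨i0, hi0⟩ := this
      refine ⟨i0, fun b hb => ?_⟩
      rw [hi0]
      have hsub : (α ∩ β).erase b ⊆ (α.erase a) ∩ (β.erase b) := by
        intro x hx
        simp only [Finset.mem_erase, Finset.mem_inter] at hx ⊢
        refine ⟨⟨fun hxa => hanb (hxa ▸ hx.2.2), hx.2.1⟩, hx.1, hx.2.2⟩
      have h2 : (α ∩ β).card - 1 ≤ ((α ∩ β).erase b).card :=
        Finset.pred_card_le_card_erase
      have h3 := Finset.card_le_card hsub
      omega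
  rw [Matrix.det_succ_row _ i0]
  apply Finset.sum_eq_zero
  intro j _
  set a := α.orderEmbOfFin hα i0 with ha
  set b := β.orderEmbOfFin hβ j with hb
  have hea : (α.erase a).card = k := by
    rw [Finset.card_erase_of_mem (α.orderEmbOfFin_mem hα i0), hα]; omega
  have heb : (β.erase b).card = k := by
    rw [Finset.card_erase_of_mem (β.orderEmbOfFin_mem hβ j), hβ]; omega
  have hz : qMinor B (α.erase a) (β.erase b) = 0 :=
    h _ _ ⟨hea, heb, hi0 b (β.orderEmbOfFin_mem hβ j)⟩
  rw [aux_qMinor_eq B hea heb] at hz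
  have hmat : ((Matrix.of fun i j : Fin (k + 1) =>
        B (α.orderEmbOfFin hα i) (β.orderEmbOfFin hβ j)).submatrix
        i0.succAbove j.succAbove)
      = Matrix.of fun i' j' : Fin k =>
        B ((α.erase a).orderEmbOfFin hea i') ((β.erase b).orderEmbOfFin heb j') := by
    ext i' j'
    simp only [Matrix.submatrix_apply, Matrix.of_apply]
    rw [aux_orderEmbOfFin_succAbove α hα i0 hea i',
        aux_orderEmbOfFin_succAbove β hβ j heb j']
  rw [hmat, hz, mul_zero]

lemma aux_qprEntry_N_allZero {B : Matrix m m R} {j : ℕ}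
    (h : qprEntry B j = QPR.N) : QPAllZero B j := by
  unfold qprEntry at h
  split_ifs at h with h1 h2
  · exact h2

lemma aux_qprEntry_eq_N {B : Matrix m m R} {j : ℕ}
    (hz : QPAllZero B j) (hne : ¬ QPAllNonzero B j) : qprEntry B j = QPR.N := by
  unfold qprEntry
  rw [if_neg hne, if_pos hz]

lemma aux_not_both (B : Matrix m m R) (j : ℕ) (hz : QPAllZero B j)
    (hnz : QPAllNonzero B j) (t : Finset m) (ht : t.card = j) : False := by
  have hqp : IsQPPair j t t := ⟨ht, ht, by rw [Finset.inter_self, ht]; omega⟩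
  exact hnz t t hqp (hz t t hqp)

end Aux

/-- if a sequence from `{A, S, N}` is attainable over a field `F`, then
(i) the last term is not `S`, and (ii) every term immediately following an `N` is `N`
(i.e. neither `NA` nor `NS` occurs as a consecutive subsequence). -/

theorem stmt_2 {F : Type*} [Field F] {n : ℕ} (q : Fin n → QPR) (h : Attainable F q) :
    (∀ hn : 0 < n, q ⟨n - 1, by omega⟩ ≠ QPR.S) ∧
      ∀ k : Fin n, ∀ hk : (k : ℕ) + 1 < n,
        q k = QPR.N → q ⟨(k : ℕ) + 1, hk⟩ = QPR.N := by
  obtain ⟨B, _hsym, hq⟩ := h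
  constructor
  · intro hn
    have hqn := hq ⟨n - 1, by omega⟩
    simp only at hqn
    have hEq : (n - 1) + 1 = n := by omega
    rw [hEq] at hqn
    rw [← hqn]
    unfold qprEntry
    split_ifs with h1 h2
    · simp
    · simp
    · exfalso
      apply h2
      unfold QPAllNonzero at h1
      push_neg at h1
      obtain ⟨α, β, hqp, hz⟩ := h1
      have huniv : ∀ γ : Finset (Fin n), γ.card = n → γ = Finset.univ := by
        intro γ hγ
        exact (Finset.card_eq_iff_eq_univ γ).mp (by simpa using hγ)
      have hαu := huniv α hqp.1
      have hβu := huniv β hqp.2.1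
      subst hαu; subst hβu
      intro α' β' hqp'
      rw [huniv α' hqp'.1, huniv β' hqp'.2.1]
      exact hz
  · intro k hk hN
    have h1 := hq k
    rw [hN] at h1
    have hz1 : QPAllZero B ((k : ℕ) + 1) := aux_qprEntry_N_allZero h1
    have hz2 : QPAllZero B ((k : ℕ) + 1 + 1) := aux_qpAllZero_succ B _ hz1
    have h2 := hq ⟨(k : ℕ) + 1, hk⟩
    simp only at h2
    rw [← h2]
    apply aux_qprEntry_eq_N hz2
    intro hnz
    obtain ⟨t, _, ht⟩ := Finset.exists_subset_card_eq
      (s := (Finset.univ : Finset (Fin n))) (n := (k : ℕ) + 1 + 1)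
      (by simpa using (by omega : (k : ℕ) + 1 + 1 ≤ n))
    exact aux_not_both B _ hz2 hnz t ht
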